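/- Invariance of linear time-invariant operators under incrementalization: if Q : S_A → S_B is a group homomorphism (linear) and time-invariant (Q ∘ z⁻¹ = z⁻¹ ∘ Q), then Q^Δ = Q. -/

import Mathlib

def delay {A : Type*} [AddCommGroup A] (s : ℕ → A) : ℕ → A
  | 0 => 0
  | (n + 1) => s n

def diff {A : Type*} [AddCommGroup A] (s : ℕ → A) : ℕ → A := s - delay s

def integ {A : Type*} [AddCommGroup A] (s : ℕ → A) : ℕ → A :=
  fun t => ∑ i ∈ Finset.range (t + 1), s i

lemma diff_integ {A : Type*} [AddCommGroup A] (s : ℕ → A) : diff (integ s) = s := by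
  funext t
  cases t with
  | zero => simp [diff, delay, integ]
  | succ n => simp [diff, delay, integ, Finset.sum_range_succ]

theorem incremental_of_lti {A B : Type*} [AddCommGroup A] [AddCommGroup B]
    (Q : (ℕ → A) → (ℕ → B))
    (hlin : ∀ s s' : ℕ → A, Q (s + s') = Q s + Q s')
    (hti : Q ∘ delay = delay ∘ Q) :
    diff ∘ Q ∘ integ = Q := by
  have hsub : ∀ s s' : ℕ → A, Q (s - s') = Q s - Q s' := by
    intro s s'
    have h := hlin (s - s') s'
    simp at h
    rw [h]; abel
  funext s
  have hti' : ∀ u, Q (delay u) = delay (Q u) := fun u => congrFun hti u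
  calc diff (Q (integ s)) = Q (integ s) - Q (delay (integ s)) := by
        rw [hti']; rfl
    _ = Q (integ s - delay (integ s)) := (hsub _ _).symm
    _ = Q s := by rw [← diff, diff_integ]
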